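/- In the setting of the previous statement (2N-periodic (𝛼̃_n) with 𝛼̃₀𝛼̃₂⋯𝛼̃_{2N−2} = 𝛼̃₁𝛼̃₃⋯𝛼̃_{2N−1}, and α_n = 𝛼̃_{2n+1}𝛼̃_{2n+2}, β_n = 𝛼̃_{2n}² + 𝛼̃_{2n+1}²), the trace of the N-step transfer matrix at zero satisfies tr 𝔛₀(0) = 2(−1)^N, where 𝔛₀(x) = 𝔅_{N−1}(x)⋯𝔅₁(x)𝔅₀(x) with 𝔅_j(x) = [[0, 1], [−α_{j−1}/α_j, (x − β_j)/α_j]]. -/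

import Mathlib

open Finset

noncomputable def Qf (a : ℤ → ℝ) (n : ℕ) : ℝ :=
  ∏ i ∈ Finset.range n, a (2 * (i : ℤ)) / a (2 * (i : ℤ) + 1)

lemma Qf_pos (a : ℤ → ℝ) (hpos : ∀ n, 0 < a n) (n : ℕ) : 0 < Qf a n :=
  Finset.prod_pos fun _ _ => div_pos (hpos _) (hpos _)

noncomputable def Gf (a : ℤ → ℝ) (c : ℝ) (m n : ℕ) : ℝ :=
  (-1) ^ n * (c / (a (2 * (n : ℤ)) * Qf a n)) * ∑ k ∈ Finset.Icc m n, Qf a k ^ 2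

lemma Qf_succ (a : ℤ → ℝ) (n : ℕ) :
    Qf a (n + 1) = Qf a n * (a (2 * (n : ℤ)) / a (2 * (n : ℤ) + 1)) := by
  rw [Qf, Finset.prod_range_succ]; rfl

lemma Gf_rec (a : ℤ → ℝ) (hpos : ∀ n, 0 < a n) (c : ℝ) (m n : ℕ)
    (hm : m ≤ n + 1) :
    a (2*(n:ℤ)+3) * a (2*(n:ℤ)+4) * Gf a c m (n+2)
      + (a (2*(n:ℤ)+2)^2 + a (2*(n:ℤ)+3)^2) * Gf a c m (n+1)
      + a (2*(n:ℤ)+1) * a (2*(n:ℤ)+2) * Gf a c m n = 0 := by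
  have ha : ∀ k : ℤ, a k ≠ 0 := fun k => (hpos k).ne'
  have hQp := Qf_pos a hpos
  have hQ : ∀ k, Qf a k ≠ 0 := fun k => (hQp k).ne'
  have e1 : (2 * ((n:ℤ)+1)) = 2*(n:ℤ)+2 := by ring
  have e2 : (2 * ((n:ℤ)+1) + 1) = 2*(n:ℤ)+3 := by ring
  have e4 : (2 * ((n:ℤ)+2)) = 2*(n:ℤ)+4 := by ring
  have hq : Qf a n = Qf a (n+1) * a (2 * (n:ℤ) + 1) / a (2 * (n:ℤ)) := by
    rw [Qf_succ]
    field_simp [ha]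
  have hq2 : Qf a (n+2) = Qf a (n+1) * a (2 * (n:ℤ) + 2) / a (2 * (n:ℤ) + 3) := by
    have := Qf_succ a (n+1)
    push_cast at this
    have e2' : (2*(n:ℤ)+2+1) = 2*(n:ℤ)+3 := by ring
    rw [e1, e2'] at this
    rw [this, mul_div_assoc]
  have hs1 : ∑ k ∈ Finset.Icc m (n+1), Qf a k ^ 2
      = (∑ k ∈ Finset.Icc m n, Qf a k ^ 2) + Qf a (n+1) ^ 2 :=
    Finset.sum_Icc_succ_top hm _
  have hs2 : ∑ k ∈ Finset.Icc m (n+2), Qf a k ^ 2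
      = (∑ k ∈ Finset.Icc m (n+1), Qf a k ^ 2) + Qf a (n+2) ^ 2 :=
    Finset.sum_Icc_succ_top (by omega) _
  simp only [Gf, hs2, hs1]
  push_cast
  rw [e1, e4, hq2, hq, pow_succ, pow_succ]
  have h0 : a (2*(n:ℤ)) ≠ 0 := ha _
  have h1 : a (2*(n:ℤ)+1) ≠ 0 := ha _
  have h2 : a (2*(n:ℤ)+2) ≠ 0 := ha _
  have h3 : a (2*(n:ℤ)+3) ≠ 0 := ha _
  have h4 : a (2*(n:ℤ)+4) ≠ 0 := ha _
  have hq1 : Qf a (n+1) ≠ 0 := hQ _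
  set S := ∑ k ∈ Finset.Icc m n, Qf a k ^ 2 with hS
  set q1 := Qf a (n+1) with hq1'
  set b0 := a (2*(n:ℤ)) with hb0
  set b1 := a (2*(n:ℤ)+1) with hb1
  set b2 := a (2*(n:ℤ)+2) with hb2
  set b3 := a (2*(n:ℤ)+3) with hb3
  set b4 := a (2*(n:ℤ)+4) with hb4
  field_simp
  ring

lemma transfer (a : ℤ → ℝ) (hpos : ∀ n, 0 < a n)
    (α β : ℤ → ℝ)
    (hα : ∀ n : ℤ, α n = a (2 * n + 1) * a (2 * n + 2))
    (hβ : ∀ n : ℤ, β n = a (2 * n) ^ 2 + a (2 * n + 1) ^ 2)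
    (B : ℕ → Matrix (Fin 2) (Fin 2) ℝ)
    (hB : ∀ j : ℕ, B j = !![0, 1; -(α ((j : ℤ) - 1) / α (j : ℤ)), (0 - β (j : ℤ)) / α (j : ℤ)]) :
    ∀ n : ℕ, ((List.range (n+1)).reverse.map B).prod =
      !![Gf a (a (-1)) 1 n, Gf a (a 0) 0 n;
         Gf a (a (-1)) 1 (n+1), Gf a (a 0) 0 (n+1)] := by
  have ha : ∀ k : ℤ, a k ≠ 0 := fun k => (hpos k).ne'
  have hQ : ∀ k, Qf a k ≠ 0 := fun k => (Qf_pos a hpos k).ne'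
  have hα0 : ∀ k : ℤ, α k ≠ 0 := fun k => by rw [hα]; exact mul_ne_zero (ha _) (ha _)
  have h10 : Finset.Icc 1 0 = (∅ : Finset ℕ) := rfl
  have hQ0 : Qf a 0 = 1 := by simp [Qf]
  have hQ1 : Qf a 1 = a 0 / a 1 := by rw [Qf_succ a 0, hQ0]; norm_num
  have hS01 : ∑ k ∈ Finset.Icc 0 1, Qf a k ^ 2 = 1 + (a 0 / a 1)^2 := by
    rw [Finset.sum_Icc_succ_top (by norm_num)]
    simp [Finset.Icc_self, hQ0, hQ1]
  intro n
  induction n with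
  | zero =>
    simp only [List.range_succ, List.range_zero, List.nil_append, List.reverse_cons,
      List.reverse_nil, List.nil_append, List.map_cons, List.map_nil, List.prod_cons,
      List.prod_nil, mul_one, hB 0]
    ext i j
    fin_cases i <;> fin_cases j
    · simp [Gf, h10]
    · simp only [Fin.zero_eta, Fin.mk_one, Matrix.cons_val', Matrix.cons_val_zero,
        Matrix.cons_val_one, Matrix.head_cons, Matrix.empty_val', Matrix.cons_val_fin_one,
        Matrix.of_apply, Gf, hQ0, Finset.Icc_self, Finset.sum_singleton]
      field_simp [ha]
      simp
    · simp only [Fin.zero_eta, Fin.mk_one, Matrix.cons_val', Matrix.cons_val_zero,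
        Matrix.cons_val_one, Matrix.head_cons, Matrix.empty_val', Matrix.cons_val_fin_one,
        Matrix.of_apply, Gf, hα, hQ0, hQ1, Finset.Icc_self, Finset.sum_singleton]
      norm_num
      field_simp [ha]
    · simp only [Fin.zero_eta, Fin.mk_one, Matrix.cons_val', Matrix.cons_val_zero,
        Matrix.cons_val_one, Matrix.head_cons, Matrix.empty_val', Matrix.cons_val_fin_one,
        Matrix.of_apply, Gf, hα, hβ, hQ0, hQ1, hS01, Finset.sum_singleton]
      norm_num
      field_simp [ha]
      ring
  | succ n ih =>
    rw [List.range_succ]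
    simp only [List.reverse_append, List.reverse_cons, List.reverse_nil, List.nil_append,
      List.map_cons, List.map_append, List.prod_cons, List.prod_append, List.map_nil,
      List.prod_nil, mul_one] at ih ⊢
    rw [ih, hB (n+1), Matrix.mul_fin_two]
    have hrec1 := Gf_rec a hpos (a (-1)) 1 n (by omega)
    have hrec2 := Gf_rec a hpos (a 0) 0 n (by omega)
    have e5 : ((n:ℤ) + 1 - 1) = (n:ℤ) := by ring
    have e6 : (2*((n:ℤ)+1)+1) = 2*(n:ℤ)+3 := by ring
    have e7 : (2*((n:ℤ)+1)+2) = 2*(n:ℤ)+4 := by ring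
    have e8 : (2*((n:ℤ)+1)) = 2*(n:ℤ)+2 := by ring
    ext i j
    fin_cases i <;> fin_cases j <;>
      simp only [Fin.zero_eta, Fin.mk_one, Matrix.cons_val', Matrix.cons_val_zero,
        Matrix.cons_val_one, Matrix.head_cons, Matrix.head_fin_const, Matrix.empty_val',
        Matrix.cons_val_fin_one, Matrix.of_apply, Fin.isValue]
    · ring
    · ring
    · simp only [hα, hβ]
      push_cast
      simp only [e5, e6, e7, e8]
      have key : Gf a (a (-1)) 1 (n+2) =
          (-(a (2*(n:ℤ)+1) * a (2*(n:ℤ)+2)) * Gf a (a (-1)) 1 n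
            - (a (2*(n:ℤ)+2)^2 + a (2*(n:ℤ)+3)^2) * Gf a (a (-1)) 1 (n+1))
            / (a (2*(n:ℤ)+3) * a (2*(n:ℤ)+4)) := by
        rw [eq_div_iff (mul_ne_zero (ha _) (ha _))]
        linear_combination hrec1
      rw [show n+1+1 = n+2 from rfl, key]
      field_simp [ha]
      ring
    · simp only [hα, hβ]
      push_cast
      simp only [e5, e6, e7, e8]
      have key : Gf a (a 0) 0 (n+2) =
          (-(a (2*(n:ℤ)+1) * a (2*(n:ℤ)+2)) * Gf a (a 0) 0 n
            - (a (2*(n:ℤ)+2)^2 + a (2*(n:ℤ)+3)^2) * Gf a (a 0) 0 (n+1))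
            / (a (2*(n:ℤ)+3) * a (2*(n:ℤ)+4)) := by
        rw [eq_div_iff (mul_ne_zero (ha _) (ha _))]
        linear_combination hrec2
      rw [show n+1+1 = n+2 from rfl, key]
      field_simp [ha]
      ring

/-- For the symmetric birth–death periodic parameters, the `N`-step transfer
matrix at `0` has trace `2·(−1)^N`. -/
theorem stmt_9 (N : ℕ) (hN : 0 < N) (at_ : ℤ → ℝ) (hpos : ∀ n, 0 < at_ n)
    (hper : ∀ n : ℤ, at_ (n + 2 * N) = at_ n)
    (hprod : ∏ k ∈ Finset.range N, at_ (2 * (k : ℤ)) =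
      ∏ k ∈ Finset.range N, at_ (2 * (k : ℤ) + 1))
    (α β : ℤ → ℝ)
    (hα : ∀ n : ℤ, α n = at_ (2 * n + 1) * at_ (2 * n + 2))
    (hβ : ∀ n : ℤ, β n = at_ (2 * n) ^ 2 + at_ (2 * n + 1) ^ 2)
    (B : ℕ → Matrix (Fin 2) (Fin 2) ℝ)
    (hB : ∀ j : ℕ, B j = !![0, 1; -(α ((j : ℤ) - 1) / α (j : ℤ)), (0 - β (j : ℤ)) / α (j : ℤ)]) :
    Matrix.trace (((List.range N).reverse.map B).prod) = 2 * (-1) ^ N := by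
  have ha : ∀ k : ℤ, at_ k ≠ 0 := fun k => (hpos k).ne'
  have hQ : ∀ k, Qf at_ k ≠ 0 := fun k => (Qf_pos at_ hpos k).ne'
  obtain ⟨M, rfl⟩ : ∃ M, N = M + 1 := ⟨N - 1, (Nat.succ_pred_eq_of_pos hN).symm⟩
  rw [transfer at_ hpos α β hα hβ B hB M, Matrix.trace_fin_two_of]
  -- key facts
  have hQN : Qf at_ (M + 1) = 1 := by
    rw [Qf, Finset.prod_div_distrib, hprod]
    exact div_self (Finset.prod_ne_zero_iff.2 fun _ _ => ha _)
  have hQ0 : Qf at_ 0 = 1 := by simp [Qf]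
  have ha1 : at_ (-1) = at_ (2 * (M : ℤ) + 1) := by
    have h := hper (-1)
    rw [← h]
    congr 1
    push_cast
    ring
  have ha2 : at_ (2 * ((M : ℤ) + 1)) = at_ 0 := by
    have h := hper 0
    rw [← h]
    congr 1
    push_cast
    ring
  have hb : at_ (2 * (M : ℤ) + 1) = Qf at_ M * at_ (2 * (M : ℤ)) := by
    have h := Qf_succ at_ M
    rw [hQN] at h
    field_simp [ha] at h
    linarith
  -- sums
  have hs1 : ∑ k ∈ Finset.Icc 1 (M + 1), Qf at_ k ^ 2
      = (∑ k ∈ Finset.Icc 1 M, Qf at_ k ^ 2) + Qf at_ (M + 1) ^ 2 :=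
    Finset.sum_Icc_succ_top (by omega) _
  have hs0 : ∑ k ∈ Finset.Icc 0 (M + 1), Qf at_ k ^ 2
      = Qf at_ 0 ^ 2 + ∑ k ∈ Finset.Icc 1 (M + 1), Qf at_ k ^ 2 := by
    rw [Finset.Icc_eq_cons_Ioc (by omega), Finset.sum_cons, ← Finset.Icc_add_one_left_eq_Ioc]
    rfl
  simp only [Gf, hs0, hs1, hQN, hQ0]
  push_cast
  rw [ha1, ha2, hb, pow_succ]
  set T := ∑ k ∈ Finset.Icc 1 M, Qf at_ k ^ 2 with hT
  field_simp [ha, hQ]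
  ring
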